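/- Let α be a nonnegative random variable taking values in [0,H) (0 < H ≤ ∞) with absolutely continuous distribution function F, density f, survival function F̄ = 1 - F positive on [0,H), and finite mean Eα > c > 0. If α is DMRD (its mean residual demand function m is nonincreasing on [0,H)), then the n-firm Cournot game with payoffs π_i(x_1,…,x_n) = x_i·(E[(α - Σ_j x_j)_+] - c) has exactly one symmetric pure Nash equilibrium. -/

import Mathlib

open MeasureTheory Set Filter Function

noncomputable section

def Gbar (F : ℝ → ℝ) (t : ℝ) : ℝ := ∫ u in Ioi t, (1 - F u)

lemma lint_key {Ω : Type*} [MeasurableSpace Ω] (μ : Measure Ω) (α : Ω → ℝ)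
    (hαmeas : Measurable α) (F : ℝ → ℝ)
    (hFsurv : ∀ x, μ {ω | x < α ω} = ENNReal.ofReal (1 - F x)) (t : ℝ) :
    ∫⁻ ω, ENNReal.ofReal (max (α ω - t) 0) ∂μ = ∫⁻ u in Ioi t, ENNReal.ofReal (1 - F u) := by
  have key := lintegral_eq_lintegral_meas_lt μ (f := fun ω => max (α ω - t) 0)
    (Eventually.of_forall fun ω => le_max_right _ _)
    ((hαmeas.sub measurable_const).max measurable_const).aemeasurable
  rw [key]
  have h1 : ∀ s ∈ Ioi (0:ℝ), μ {a | s < max (α a - t) 0} = ENNReal.ofReal (1 - F (t + s)) := by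
    intro s hs
    rw [← hFsurv]
    congr 1
    ext ω
    simp only [mem_setOf_eq, lt_max_iff]
    constructor
    · rintro (h | h)
      · linarith
      · exact absurd hs (by simpa using h.le)
    · intro h; left; linarith
  rw [setLIntegral_congr_fun measurableSet_Ioi h1]
  have h2 : ∀ s : ℝ, (Ioi (0:ℝ)).indicator (fun s => ENNReal.ofReal (1 - F (t + s))) s
      = (Ioi t).indicator (fun u => ENNReal.ofReal (1 - F u)) (s + t) := by
    intro s
    by_cases hs : s ∈ Ioi (0:ℝ)
    · rw [indicator_of_mem hs, indicator_of_mem (by simp at hs ⊢; linarith)]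
      rw [add_comm]
    · rw [indicator_of_notMem hs, indicator_of_notMem (by simp at hs ⊢; linarith)]
  rw [← lintegral_indicator measurableSet_Ioi _]
  calc ∫⁻ s, (Ioi (0:ℝ)).indicator (fun s => ENNReal.ofReal (1 - F (t + s))) s
      = ∫⁻ s, (Ioi t).indicator (fun u => ENNReal.ofReal (1 - F u)) (s + t) := by
        exact lintegral_congr h2
    _ = ∫⁻ u, (Ioi t).indicator (fun u => ENNReal.ofReal (1 - F u)) u :=
        lintegral_add_right_eq_self _ t
    _ = ∫⁻ u in Ioi t, ENNReal.ofReal (1 - F u) := (lintegral_indicator measurableSet_Ioi _)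

lemma Gbar_key {Ω : Type*} [MeasurableSpace Ω] (μ : Measure Ω) [IsProbabilityMeasure μ]
    (α : Ω → ℝ) (hαmeas : Measurable α) (hαint : Integrable α μ)
    (F : ℝ → ℝ) (hFmeas : Measurable F) (hFle : ∀ x, F x ≤ 1)
    (hFsurv : ∀ x, μ {ω | x < α ω} = ENNReal.ofReal (1 - F x)) (t : ℝ) :
    IntegrableOn (fun u => 1 - F u) (Ioi t) ∧ (∫ ω, max (α ω - t) 0 ∂μ) = Gbar F t := by
  have hmax : Integrable (fun ω => max (α ω - t) 0) μ :=
    (hαint.sub (integrable_const t)).pos_part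
  have hfin : ∫⁻ ω, ENNReal.ofReal (max (α ω - t) 0) ∂μ < ⊤ := hmax.lintegral_lt_top
  have key := lint_key μ α hαmeas F hFsurv t
  have hnn : ∀ u : ℝ, 0 ≤ 1 - F u := fun u => by linarith [hFle u]
  have hio : IntegrableOn (fun u => 1 - F u) (Ioi t) := by
    refine ⟨(measurable_const.sub hFmeas).aestronglyMeasurable, ?_⟩
    rw [hasFiniteIntegral_iff_ofReal (Eventually.of_forall fun u => hnn u)]
    rw [← key]; exact hfin
  refine ⟨hio, ?_⟩
  rw [integral_eq_lintegral_of_nonneg_ae (f := fun ω => max (α ω - t) 0)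
    (Eventually.of_forall fun ω => le_max_right _ _) hmax.aestronglyMeasurable]
  rw [Gbar, integral_eq_lintegral_of_nonneg_ae (f := fun u => 1 - F u)
    (Eventually.of_forall fun u => hnn u) hio.aestronglyMeasurable]
  rw [key]

lemma Gbar_zero (F : ℝ → ℝ) (hFmono : Monotone F) (hFle : ∀ x, F x ≤ 1) (t : ℝ)
    (ht : F t = 1) : Gbar F t = 0 := by
  rw [Gbar]
  rw [setIntegral_congr_fun measurableSet_Ioi
    (g := fun _ => (0:ℝ)) (fun u hu => by
      have h1 := hFmono (le_of_lt hu)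
      have h2 := hFle u
      simp only; rw [ht] at h1; linarith)]
  simp

lemma Gbar_nonneg (F : ℝ → ℝ) (hFle : ∀ x, F x ≤ 1) (t : ℝ) : 0 ≤ Gbar F t :=
  setIntegral_nonneg measurableSet_Ioi fun u _ => by linarith [hFle u]

lemma Gbar_split (F : ℝ → ℝ) (hio : ∀ t, IntegrableOn (fun u => 1 - F u) (Ioi t))
    {s t : ℝ} (hst : s ≤ t) :
    Gbar F s = (∫ u in Ioc s t, (1 - F u)) + Gbar F t := by
  rw [Gbar, Gbar, ← setIntegral_union (Ioc_disjoint_Ioi le_rfl) measurableSet_Ioi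
    ((hio s).mono_set Ioc_subset_Ioi_self) (hio t), Ioc_union_Ioi_eq_Ioi hst]

lemma Gbar_anti (F : ℝ → ℝ) (hFle : ∀ x, F x ≤ 1)
    (hio : ∀ t, IntegrableOn (fun u => 1 - F u) (Ioi t)) {s t : ℝ} (hst : s ≤ t) :
    Gbar F t ≤ Gbar F s := by
  rw [Gbar_split F hio hst]
  have : 0 ≤ ∫ u in Ioc s t, (1 - F u) :=
    setIntegral_nonneg measurableSet_Ioc fun u _ => by linarith [hFle u]
  linarith

lemma Gbar_primitive (F : ℝ → ℝ) (hio : ∀ t, IntegrableOn (fun u => 1 - F u) (Ioi t))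
    (t : ℝ) : Gbar F t = Gbar F 0 - ∫ u in (0:ℝ)..t, (1 - F u) := by
  rcases le_total 0 t with h | h
  · rw [intervalIntegral.integral_of_le h]
    have := Gbar_split F hio h
    linarith
  · rw [intervalIntegral.integral_symm, intervalIntegral.integral_of_le h]
    have := Gbar_split F hio h
    linarith

/-- Expected payoff of firm `i` in the `n`-firm Cournot game with stochastic
demand intercept `α` and constant marginal cost `c`. -/
def payoff {Ω : Type*} [MeasurableSpace Ω] (μ : Measure Ω) (α : Ω → ℝ) (c : ℝ)
    {n : ℕ} (x : Fin n → ℝ) (i : Fin n) : ℝ :=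
  x i * ((∫ ω, max (α ω - ∑ j, x j) 0 ∂μ) - c)

/-- Pure Nash equilibrium with nonnegative outputs. -/
def IsNash {Ω : Type*} [MeasurableSpace Ω] (μ : Measure Ω) (α : Ω → ℝ) (c : ℝ)
    {n : ℕ} (x : Fin n → ℝ) : Prop :=
  (∀ i, 0 ≤ x i) ∧
    ∀ i : Fin n, ∀ y : ℝ, 0 ≤ y →
      payoff μ α c (Function.update x i y) i ≤ payoff μ α c x i

/-- The mean residual demand (MRD) function `m(x) = (1/F̄(x)) ∫_x^H F̄(u) du`
(the survival function vanishes beyond `H`, so the integral may be taken over `(x,∞)`). -/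
def mrd (F : ℝ → ℝ) (x : ℝ) : ℝ :=
  (∫ u in Ioi x, (1 - F u)) / (1 - F x)

set_option maxHeartbeats 2000000 in
/-- If `α` is DMRD, then the Cournot game has exactly one symmetric pure Nash
equilibrium. -/
theorem stmt4 {Ω : Type*} [MeasurableSpace Ω] (μ : Measure Ω) [IsProbabilityMeasure μ]
    (α : Ω → ℝ) (hαmeas : Measurable α)
    (H : EReal) (hH : 0 < H)
    (hval : ∀ᵐ ω ∂μ, 0 ≤ α ω ∧ (α ω : EReal) < H)
    (hαint : Integrable α μ)
    (F f : ℝ → ℝ)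
    (hF : ∀ x : ℝ, F x = (μ {ω | α ω ≤ x}).toReal)
    (hfmeas : Measurable f) (hfnonneg : ∀ x, 0 ≤ f x) (hfint : Integrable f)
    (hdens : ∀ x : ℝ, F x = ∫ u in Iic x, f u)
    (hFbar : ∀ x : ℝ, 0 ≤ x → (x : EReal) < H → 0 < 1 - F x)
    (c : ℝ) (hc : 0 < c) (hcE : c < ∫ ω, α ω ∂μ)
    (n : ℕ) (hn : 1 ≤ n)
    (hDMRD : ∀ x y : ℝ, 0 ≤ x → x ≤ y → (y : EReal) < H → mrd F y ≤ mrd F x) :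
    ∃! xs : ℝ, 0 < xs ∧ IsNash μ α c (fun _ : Fin n => xs) := by
  -- Basic facts about F
  have hFle : ∀ x, F x ≤ 1 := fun x => by
    rw [hF]
    have h := prob_le_one (μ := μ) (s := {ω | α ω ≤ x})
    have := ENNReal.toReal_mono ENNReal.one_ne_top h
    simpa using this
  have hFnn : ∀ x, 0 ≤ F x := fun x => by rw [hF]; exact ENNReal.toReal_nonneg
  have hbar_nn : ∀ t, 0 ≤ 1 - F t := fun t => by linarith [hFle t]
  have hFmono : Monotone F := fun a b hab => by
    rw [hF, hF]
    exact ENNReal.toReal_mono (measure_ne_top μ _)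
      (measure_mono fun ω (hω : α ω ≤ a) => le_trans hω hab)
  have hFsurv : ∀ x, μ {ω | x < α ω} = ENNReal.ofReal (1 - F x) := by
    intro x
    have hmeas : MeasurableSet {ω | α ω ≤ x} := hαmeas measurableSet_Iic
    have hcompl : {ω | x < α ω} = {ω | α ω ≤ x}ᶜ := by ext ω; simp [not_le]
    rw [hcompl, measure_compl hmeas (measure_ne_top μ _), measure_univ]
    rw [← ENNReal.ofReal_toReal (a := 1 - μ {ω | α ω ≤ x})
      (tsub_le_self.trans_lt ENNReal.one_lt_top).ne,
      ENNReal.toReal_sub_of_le prob_le_one ENNReal.one_ne_top, ENNReal.toReal_one, hF]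
  -- continuity of F
  have hFstep : ∀ a b : ℝ, a ≤ b → F b = F a + ∫ u in Ioc a b, f u := by
    intro a b hab
    rw [hdens b, hdens a, ← setIntegral_union (Iic_disjoint_Ioc le_rfl) measurableSet_Ioc
      hfint.integrableOn hfint.integrableOn, Iic_union_Ioc_eq_Iic hab]
  have hFprim : ∀ x : ℝ, F x = F 0 + ∫ u in (0:ℝ)..x, f u := by
    intro x
    rcases le_total 0 x with h | h
    · rw [intervalIntegral.integral_of_le h]; exact hFstep 0 x h
    · rw [intervalIntegral.integral_symm, intervalIntegral.integral_of_le h]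
      have := hFstep x 0 h
      linarith
  have hFcont : Continuous F := by
    rw [funext hFprim]
    exact continuous_const.add (hfint.continuous_primitive 0)
  have hbarcont : Continuous (fun u : ℝ => 1 - F u) := continuous_const.sub hFcont
  -- Gbar facts
  have hGkey := fun t => Gbar_key μ α hαmeas hαint F hFcont.measurable hFle hFsurv t
  have GbarK : ∀ t, (∫ ω, max (α ω - t) 0 ∂μ) = Gbar F t := fun t => (hGkey t).2
  have hio : ∀ t, IntegrableOn (fun u => 1 - F u) (Ioi t) := fun t => (hGkey t).1
  have hGbar0 : Gbar F 0 = ∫ ω, α ω ∂μ := by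
    rw [← GbarK 0]
    apply integral_congr_ae
    filter_upwards [hval] with ω hω
    simp [hω.1]
  have hGbarCont : Continuous (Gbar F) := by
    rw [funext (Gbar_primitive F hio)]
    exact continuous_const.sub
      (intervalIntegral.continuous_primitive (fun a b => hbarcont.intervalIntegrable a b) 0)
  have hGbarDeriv : ∀ t, HasDerivAt (Gbar F) (-(1 - F t)) t := by
    intro t
    rw [funext (Gbar_primitive F hio)]
    exact HasDerivAt.const_sub _ (intervalIntegral.integral_hasDerivAt_right
      (hbarcont.intervalIntegrable 0 t)
      (hbarcont.stronglyMeasurableAtFilter _ _) hbarcont.continuousAt)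
  have Hlt : ∀ t : ℝ, 0 < 1 - F t → (t : EReal) < H := by
    intro t ht
    by_contra hcon
    push_neg at hcon
    have hz : μ {ω | t < α ω} = 0 := by
      refine measure_mono_null ?_ (ae_iff.mp hval)
      intro ω (hω : t < α ω)
      simp only [mem_setOf_eq, not_and, not_lt]
      intro _
      calc H ≤ (t : EReal) := hcon
        _ ≤ (α ω : EReal) := by exact_mod_cast hω.le
    rw [hFsurv t] at hz
    rw [ENNReal.ofReal_eq_zero] at hz
    linarith
  -- derivative of deviation profit
  have hder : ∀ s y : ℝ, HasDerivAt (fun y => y * (Gbar F (y + s) - c))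
      ((Gbar F (y + s) - c) - y * (1 - F (y + s))) y := by
    intro s y
    have h1 : HasDerivAt (fun y : ℝ => y + s) 1 y := (hasDerivAt_id y).add_const s
    have h2 : HasDerivAt (fun y => Gbar F (y + s)) (-(1 - F (y + s))) y := by
      have := (hGbarDeriv (y + s)).comp y h1
      simpa [Function.comp_def] using this
    have h3 := (hasDerivAt_id y).mul (h2.sub_const c)
    refine HasDerivAt.congr_deriv h3 ?_
    simp only [id_eq]
    ring
  have hdevcont : ∀ s : ℝ, Continuous (fun y : ℝ => y * (Gbar F (y + s) - c)) :=
    fun s => continuous_id'.mul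
      ((hGbarCont.comp (continuous_id'.add continuous_const)).sub continuous_const)
  -- psi
  set psi : ℝ → ℝ := fun x => Gbar F ((n:ℝ) * x) - x * (1 - F ((n:ℝ) * x)) - c with hpsi_def
  have hNone : (1:ℝ) ≤ (n:ℝ) := by exact_mod_cast hn
  have hψcont : Continuous psi := by
    apply Continuous.sub _ continuous_const
    exact (hGbarCont.comp (continuous_const.mul continuous_id')).sub
      (continuous_id'.mul (hbarcont.comp (continuous_const.mul continuous_id')))
  have hψ0 : 0 < psi 0 := by
    simp only [hpsi_def, mul_zero, zero_mul, sub_zero]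
    rw [hGbar0]
    linarith
  have posbar : ∀ z : ℝ, psi z = 0 → 0 < 1 - F ((n:ℝ) * z) := by
    intro z hz
    rcases (hbar_nn ((n:ℝ) * z)).lt_or_eq with h | h
    · exact h
    · exfalso
      have hF1 : F ((n:ℝ) * z) = 1 := by linarith
      have hGz : Gbar F ((n:ℝ) * z) = 0 := Gbar_zero F hFmono hFle _ hF1
      rw [hpsi_def] at hz
      simp only at hz
      rw [hGz, ← h] at hz
      simp at hz
      linarith
  have mrd_mul : ∀ t, 1 - F t ≠ 0 → (1 - F t) * mrd F t = Gbar F t := by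
    intro t ht
    rw [mrd, mul_comm, div_mul_cancel₀ _ ht]
    rfl
  -- existence of a root of psi
  obtain ⟨x0, hx01, hx0c⟩ : ∃ x0 : ℝ, 1 ≤ x0 ∧ Gbar F x0 < c := by
    have hunion : (⋃ k : ℕ, Ioc (0:ℝ) k) = Ioi 0 := by
      ext x
      simp only [mem_iUnion, mem_Ioc, mem_Ioi]
      constructor
      · rintro ⟨k, hk, _⟩; exact hk
      · intro hx
        obtain ⟨k, hk⟩ := exists_nat_ge x
        exact ⟨k, hx, hk⟩
    have htend := tendsto_setIntegral_of_monotone (μ := volume)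
      (f := fun u => 1 - F u) (s := fun k : ℕ => Ioc (0:ℝ) k)
      (fun k => measurableSet_Ioc)
      (fun a b hab => Ioc_subset_Ioc le_rfl (by exact_mod_cast hab))
      (by rw [hunion]; exact hio 0)
    rw [hunion] at htend
    have hev := (htend.eventually (eventually_gt_nhds
      (show Gbar F 0 - c < ∫ u in Ioi (0:ℝ), (1 - F u) from by
        rw [← Gbar]; linarith))).exists
    obtain ⟨k, hk⟩ := hev
    refine ⟨max 1 k, le_max_left _ _, ?_⟩
    have hsplit := Gbar_split F hio (Nat.cast_nonneg k : (0:ℝ) ≤ k)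
    have h1 : Gbar F (max 1 (k:ℝ)) ≤ Gbar F k := Gbar_anti F hFle hio (le_max_right _ _)
    linarith
  have hψx0 : psi x0 < 0 := by
    have h1 : Gbar F ((n:ℝ) * x0) ≤ Gbar F x0 :=
      Gbar_anti F hFle hio (le_mul_of_one_le_left (by linarith) hNone)
    have h2 : 0 ≤ x0 * (1 - F ((n:ℝ) * x0)) := mul_nonneg (by linarith) (hbar_nn _)
    simp only [hpsi_def]
    linarith
  obtain ⟨xs, hxsmem, hroot⟩ :=
    (intermediate_value_Ioo' (by linarith : (0:ℝ) ≤ x0) hψcont.continuousOn)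
      (⟨hψx0, hψ0⟩ : (0:ℝ) ∈ Ioo (psi x0) (psi 0))
  have hxs_pos : 0 < xs := hxsmem.1
  -- sums
  have hsum_const : ∀ z : ℝ, ∑ _j : Fin n, z = (n:ℝ) * z := by
    intro z
    rw [Finset.sum_const, Finset.card_univ, Fintype.card_fin, nsmul_eq_mul]
  have hsum_upd : ∀ (z y : ℝ) (i : Fin n),
      (∑ j, Function.update (fun _ : Fin n => z) i y j) = y + ((n:ℝ) - 1) * z := by
    intro z y i
    rw [Finset.sum_update_of_mem (Finset.mem_univ i)]
    have hcard : (Finset.univ \ {i}).card = n - 1 := by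
      rw [Finset.card_sdiff_of_subset (Finset.singleton_subset_iff.mpr (Finset.mem_univ i)),
        Finset.card_univ, Fintype.card_fin, Finset.card_singleton]
    rw [Finset.sum_const, hcard, nsmul_eq_mul]
    congr 1
    push_cast [Nat.cast_sub hn]
    ring
  have payoff_eq : ∀ (x : Fin n → ℝ) (i : Fin n),
      payoff μ α c x i = x i * (Gbar F (∑ j, x j) - c) := by
    intro x i
    rw [payoff, GbarK]
  -- sufficiency: a positive root of psi is a Nash equilibrium
  have key_max : ∀ z : ℝ, 0 < z → psi z = 0 → ∀ y : ℝ, 0 ≤ y →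
      y * (Gbar F (y + ((n:ℝ) - 1) * z) - c) ≤ z * (Gbar F (z + ((n:ℝ) - 1) * z) - c) := by
    intro z hz hzroot y hy
    set s : ℝ := ((n:ℝ) - 1) * z with hs_def
    have hs0 : 0 ≤ s := mul_nonneg (by linarith) hz.le
    have hts : z + s = (n:ℝ) * z := by rw [hs_def]; ring
    have hbstar : 0 < 1 - F ((n:ℝ) * z) := posbar z hzroot
    have hHstar : (((n:ℝ) * z : ℝ) : EReal) < H := Hlt _ hbstar
    have hfoc : Gbar F ((n:ℝ) * z) - z * (1 - F ((n:ℝ) * z)) - c = 0 := by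
      simpa [hpsi_def] using hzroot
    have hmstar : (1 - F ((n:ℝ) * z)) * mrd F ((n:ℝ) * z) = Gbar F ((n:ℝ) * z) :=
      mrd_mul _ hbstar.ne'
    have hmz : 0 < mrd F ((n:ℝ) * z) - z := by nlinarith
    set h : ℝ → ℝ := fun y => y * (Gbar F (y + s) - c) with hh_def
    have hmono : StrictMonoOn h (Icc 0 z) := by
      apply strictMonoOn_of_deriv_pos (convex_Icc 0 z) (hdevcont s).continuousOn
      intro y hyI
      rw [interior_Icc] at hyI
      rw [(hder s y).deriv]
      have hu0 : (0:ℝ) ≤ y + s := by linarith [hyI.1]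
      have hule : y + s ≤ (n:ℝ) * z := by rw [← hts]; linarith [hyI.2]
      have hble : 1 - F ((n:ℝ) * z) ≤ 1 - F (y + s) := by linarith [hFmono hule]
      have hbaru : 0 < 1 - F (y + s) := lt_of_lt_of_le hbstar hble
      have hm : mrd F ((n:ℝ) * z) ≤ mrd F (y + s) := hDMRD _ _ hu0 hule hHstar
      have hmu : (1 - F (y + s)) * mrd F (y + s) = Gbar F (y + s) := mrd_mul _ hbaru.ne'
      have hA : mrd F ((n:ℝ) * z) - z < mrd F (y + s) - y := by linarith [hyI.2]
      have hchain : (1 - F ((n:ℝ) * z)) * (mrd F ((n:ℝ) * z) - z)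
          < (1 - F (y + s)) * (mrd F (y + s) - y) := by
        calc (1 - F ((n:ℝ) * z)) * (mrd F ((n:ℝ) * z) - z)
            < (1 - F ((n:ℝ) * z)) * (mrd F (y + s) - y) :=
              mul_lt_mul_of_pos_left hA hbstar
          _ ≤ (1 - F (y + s)) * (mrd F (y + s) - y) :=
              mul_le_mul_of_nonneg_right hble (by linarith)
      nlinarith
    have hanti : StrictAntiOn h (Ici z) := by
      apply strictAntiOn_of_deriv_neg (convex_Ici z) (hdevcont s).continuousOn
      intro y hyI
      rw [interior_Ici] at hyI
      have hzy : z < y := hyI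
      rw [(hder s y).deriv]
      have hue : (n:ℝ) * z ≤ y + s := by rw [← hts]; linarith [hzy.le]
      have hu0 : (0:ℝ) ≤ (n:ℝ) * z := by positivity
      rcases (hbar_nn (y + s)).lt_or_eq with hpos | h0
      · have hHu : ((y + s : ℝ) : EReal) < H := Hlt _ hpos
        have hm : mrd F (y + s) ≤ mrd F ((n:ℝ) * z) := hDMRD _ _ hu0 hue hHu
        have hmu : (1 - F (y + s)) * mrd F (y + s) = Gbar F (y + s) := mrd_mul _ hpos.ne'
        have hble : 1 - F (y + s) ≤ 1 - F ((n:ℝ) * z) := by linarith [hFmono hue]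
        rcases le_or_gt (mrd F (y + s) - y) 0 with hA | hA
        · nlinarith [mul_nonneg hpos.le (neg_nonneg.mpr hA)]
        · have hchain : (1 - F (y + s)) * (mrd F (y + s) - y)
              < (1 - F ((n:ℝ) * z)) * (mrd F ((n:ℝ) * z) - z) := by
            calc (1 - F (y + s)) * (mrd F (y + s) - y)
                ≤ (1 - F ((n:ℝ) * z)) * (mrd F (y + s) - y) :=
                  mul_le_mul_of_nonneg_right hble hA.le
              _ < (1 - F ((n:ℝ) * z)) * (mrd F ((n:ℝ) * z) - z) :=
                  mul_lt_mul_of_pos_left (by linarith) hbstar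
          nlinarith
      · have hGz : Gbar F (y + s) = 0 := Gbar_zero F hFmono hFle _ (by linarith)
        rw [hGz, ← h0]
        simp only [mul_zero]
        linarith
    rcases le_total y z with hyz | hyz
    · exact hmono.monotoneOn ⟨hy, hyz⟩ ⟨le_refl 0 |>.trans hz.le, le_rfl⟩ hyz
    · exact hanti.antitoneOn (mem_Ici.mpr le_rfl) (mem_Ici.mpr hyz) hyz
  -- necessity: any positive symmetric Nash gives a root of psi
  have key_foc : ∀ z : ℝ, 0 < z → IsNash μ α c (fun _ : Fin n => z) → psi z = 0 := by
    intro z hz hNash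
    obtain ⟨hnn, hbest⟩ := hNash
    set s : ℝ := ((n:ℝ) - 1) * z with hs_def
    have hts : z + s = (n:ℝ) * z := by rw [hs_def]; ring
    have i0 : Fin n := ⟨0, by omega⟩
    have hUp : ∀ y : ℝ, 0 ≤ y →
        y * (Gbar F (y + s) - c) ≤ z * (Gbar F (z + s) - c) := by
      intro y hy
      have hb := hbest i0 y hy
      rw [payoff_eq, payoff_eq] at hb
      rw [hsum_upd z y i0, hsum_const z] at hb
      simp only [Function.update_self] at hb
      rw [hts]
      exact hb
    have hloc : IsLocalMax (fun y : ℝ => y * (Gbar F (y + s) - c)) z := by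
      filter_upwards [IsOpen.mem_nhds isOpen_Ioi hz] with y hy
      exact hUp y hy.le
    have hzero := hloc.hasDerivAt_eq_zero (hder s z)
    rw [hts] at hzero
    simp only [hpsi_def]
    linarith
  -- uniqueness of positive roots of psi
  have key_uniq : ∀ a b : ℝ, 0 < a → 0 < b → psi a = 0 → psi b = 0 → a = b := by
    have main : ∀ a b : ℝ, 0 < a → a < b → psi b = 0 → 0 < psi a := by
      intro a b ha hab hb
      have hbb : 0 < 1 - F ((n:ℝ) * b) := posbar b hb
      have hHb : (((n:ℝ) * b : ℝ) : EReal) < H := Hlt _ hbb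
      have h0a : (0:ℝ) ≤ (n:ℝ) * a := by positivity
      have hab' : (n:ℝ) * a ≤ (n:ℝ) * b :=
        mul_le_mul_of_nonneg_left hab.le (Nat.cast_nonneg n)
      have hm : mrd F ((n:ℝ) * b) ≤ mrd F ((n:ℝ) * a) := hDMRD _ _ h0a hab' hHb
      have hba : 1 - F ((n:ℝ) * b) ≤ 1 - F ((n:ℝ) * a) := by linarith [hFmono hab']
      have hbapos : 0 < 1 - F ((n:ℝ) * a) := lt_of_lt_of_le hbb hba
      have hmb : (1 - F ((n:ℝ) * b)) * mrd F ((n:ℝ) * b) = Gbar F ((n:ℝ) * b) :=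
        mrd_mul _ hbb.ne'
      have hma : (1 - F ((n:ℝ) * a)) * mrd F ((n:ℝ) * a) = Gbar F ((n:ℝ) * a) :=
        mrd_mul _ hbapos.ne'
      have hfocb : Gbar F ((n:ℝ) * b) - b * (1 - F ((n:ℝ) * b)) - c = 0 := by
        simpa [hpsi_def] using hb
      have hmxb : 0 < mrd F ((n:ℝ) * b) - b := by nlinarith
      have hchain : (1 - F ((n:ℝ) * b)) * (mrd F ((n:ℝ) * b) - b)
          < (1 - F ((n:ℝ) * a)) * (mrd F ((n:ℝ) * a) - a) := by
        calc (1 - F ((n:ℝ) * b)) * (mrd F ((n:ℝ) * b) - b)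
            < (1 - F ((n:ℝ) * b)) * (mrd F ((n:ℝ) * a) - a) :=
              mul_lt_mul_of_pos_left (by linarith) hbb
          _ ≤ (1 - F ((n:ℝ) * a)) * (mrd F ((n:ℝ) * a) - a) :=
              mul_le_mul_of_nonneg_right hba (by linarith)
      simp only [hpsi_def]
      nlinarith
    intro a b ha hb hpa hpb
    rcases lt_trichotomy a b with h | h | h
    · exact absurd hpa (main a b ha h hpb).ne'
    · exact h
    · exact absurd hpb (main b a hb h hpa).ne'
  -- conclusion
  refine ⟨xs, ⟨hxs_pos, ?_, ?_⟩, ?_⟩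
  · exact fun _ => hxs_pos.le
  · intro i y hy
    rw [payoff_eq, payoff_eq, hsum_upd xs y i, hsum_const xs]
    simp only [Function.update_self]
    have := key_max xs hxs_pos hroot y hy
    have hts : xs + ((n:ℝ) - 1) * xs = (n:ℝ) * xs := by ring
    rw [hts] at this
    exact this
  · rintro z ⟨hz, hzNash⟩
    exact key_uniq z xs hz hxs_pos (key_foc z hz hzNash) hroot
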